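/- Le Cam's method with fuzzy hypotheses: let {P_θ : θ ∈ Θ} be a family of distributions, T : Θ → R a functional, and Π0, Π1 priors on Θ with induced marginals M0, M1 on the observation Z. If Π0(θ : T(θ) ≤ ξ − s) ≥ 1 − β0, Π1(θ : T(θ) ≥ ξ + s) ≥ 1 − β1, and TV(M1, M0) ≤ η < 1, then inf over estimators T̂ of sup_{θ∈Θ} P_θ( |T̂(Z) − T(θ)| ≥ s ) ≥ (1 − η − β0 − β1)/2. -/

import Mathlib

open MeasureTheory

/-- Le Cam's method with fuzzy hypotheses: any estimator of the functional T based
on an observation Z incurs, for some parameter, error at least s with probability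
at least (1 − η − β0 − β1)/2. -/
theorem lecam_fuzzy
    {Θ Z : Type*} [MeasurableSpace Θ] [MeasurableSpace Z]
    (P : Θ → Measure Z) (hP : ∀ θ, IsProbabilityMeasure (P θ))
    (hPmeas : Measurable P)
    (T : Θ → ℝ) (Pr0 Pr1 : Measure Θ)
    [IsProbabilityMeasure Pr0] [IsProbabilityMeasure Pr1]
    (ξ s : ℝ) (hs : 0 < s)
    (β0 β1 η : ℝ) (hβ0 : 0 ≤ β0) (hβ0' : β0 < 1) (hβ1 : 0 ≤ β1) (hβ1' : β1 < 1)
    (hη : 0 ≤ η) (hη1 : η < 1)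
    (h0 : 1 - β0 ≤ (Pr0 {θ | T θ ≤ ξ - s}).toReal)
    (h1 : 1 - β1 ≤ (Pr1 {θ | ξ + s ≤ T θ}).toReal)
    (hTV : ∀ A : Set Z, MeasurableSet A →
      |((Pr1.bind P) A).toReal - ((Pr0.bind P) A).toReal| ≤ η) :
    ∀ That : Z → ℝ, Measurable That →
      (1 - η - β0 - β1) / 2 ≤ ⨆ θ, ((P θ) {z | s ≤ |That z - T θ|}).toReal := by
  intro That hThat
  -- the error sets
  set E : Θ → Set Z := fun θ => {z | s ≤ |That z - T θ|} with hE
  -- the test set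
  set A : Set Z := That ⁻¹' (Set.Ici ξ) with hAdef
  have hA : MeasurableSet A := hThat measurableSet_Ici
  -- the supremum (in ℝ≥0∞)
  set R : ENNReal := ⨆ θ, P θ (E θ) with hRdef
  have hEfin : ∀ θ, P θ (E θ) ≤ 1 := fun θ => by
    haveI := hP θ; exact prob_le_one
  have hR1 : R ≤ 1 := iSup_le hEfin
  have hRne : R ≠ ⊤ := fun h => by simp [h] at hR1
  -- measurability of θ ↦ P θ B
  have hmeasB : ∀ B : Set Z, MeasurableSet B → Measurable (fun θ => P θ B) :=
    fun B hB => Measure.measurable_measure.mp hPmeas B hB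
  -- generic claim
  have key : ∀ (Pr : Measure Θ) (_ : IsProbabilityMeasure Pr) (S : Set Θ)
      (A' : Set Z) (_ : MeasurableSet A') (β : ℝ) (_ : 0 ≤ β) (_ : β ≤ 1)
      (_ : ∀ θ ∈ S, A' ⊆ E θ) (_ : 1 - β ≤ (Pr S).toReal),
      ∫⁻ θ, P θ A' ∂Pr ≤ R + ENNReal.ofReal β := by
    intro Pr hPr S A' hA' β hβ hβ' hsub hSlb
    haveI := hPr
    set G : Set Θ := {θ | P θ A' ≤ R} with hGdef
    have hG : MeasurableSet G := measurableSet_le (hmeasB A' hA') measurable_const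
    have hSG : S ⊆ G := fun θ hθ =>
      le_trans (measure_mono (hsub θ hθ)) (le_iSup (fun θ => P θ (E θ)) θ)
    have hGc : Pr Gᶜ ≤ ENNReal.ofReal β := by
      have h2 : ENNReal.ofReal (1 - β) ≤ Pr S :=
        ENNReal.ofReal_le_of_le_toReal hSlb
      have h3 : ENNReal.ofReal (1 - β) ≤ Pr G := h2.trans (measure_mono hSG)
      calc Pr Gᶜ = 1 - Pr G := prob_compl_eq_one_sub hG
        _ ≤ 1 - ENNReal.ofReal (1 - β) := tsub_le_tsub_left h3 1
        _ = ENNReal.ofReal 1 - ENNReal.ofReal (1 - β) := by rw [ENNReal.ofReal_one]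
        _ = ENNReal.ofReal (1 - (1 - β)) := (ENNReal.ofReal_sub 1 (by linarith)).symm
        _ = ENNReal.ofReal β := by ring_nf
    calc ∫⁻ θ, P θ A' ∂Pr
        = (∫⁻ θ in G, P θ A' ∂Pr) + ∫⁻ θ in Gᶜ, P θ A' ∂Pr :=
          (lintegral_add_compl _ hG).symm
      _ ≤ (∫⁻ _ in G, R ∂Pr) + ∫⁻ _ in Gᶜ, 1 ∂Pr :=
          add_le_add (setLIntegral_mono measurable_const (fun θ hθ => hθ))
            (setLIntegral_mono measurable_const
              (fun θ _ => by haveI := hP θ; exact prob_le_one))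
      _ = R * Pr G + Pr Gᶜ := by rw [setLIntegral_const, setLIntegral_const, one_mul]
      _ ≤ R * 1 + ENNReal.ofReal β := by gcongr; exact prob_le_one
      _ = R + ENNReal.ofReal β := by rw [mul_one]
  -- the two inclusions
  have hsub0 : ∀ θ ∈ {θ | T θ ≤ ξ - s}, A ⊆ E θ := by
    intro θ hθ z hz
    have h1 : ξ ≤ That z := hz
    have h2 : T θ ≤ ξ - s := hθ
    have : s ≤ That z - T θ := by linarith
    exact this.trans (le_abs_self _)
  have hsub1 : ∀ θ ∈ {θ | ξ + s ≤ T θ}, Aᶜ ⊆ E θ := by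
    intro θ hθ z hz
    have h1 : That z < ξ := by
      simp only [hAdef, Set.mem_compl_iff, Set.mem_preimage, Set.mem_Ici, not_le] at hz
      exact hz
    have h2 : ξ + s ≤ T θ := hθ
    have h3 : s ≤ T θ - That z := by linarith
    calc s ≤ T θ - That z := h3
      _ ≤ |That z - T θ| := by rw [abs_sub_comm]; exact le_abs_self _
  have c0 : (Pr0.bind P) A ≤ R + ENNReal.ofReal β0 := by
    rw [Measure.bind_apply hA hPmeas.aemeasurable]
    exact key Pr0 inferInstance _ A hA β0 hβ0 hβ0'.le hsub0 h0
  have c1 : (Pr1.bind P) Aᶜ ≤ R + ENNReal.ofReal β1 := by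
    rw [Measure.bind_apply hA.compl hPmeas.aemeasurable]
    exact key Pr1 inferInstance _ Aᶜ hA.compl β1 hβ1 hβ1'.le hsub1 h1
  -- M1 A + M1 Aᶜ = 1
  have csum : (Pr1.bind P) A + (Pr1.bind P) Aᶜ = 1 := by
    rw [Measure.bind_apply hA hPmeas.aemeasurable,
      Measure.bind_apply hA.compl hPmeas.aemeasurable,
      ← lintegral_add_left (hmeasB A hA)]
    have heq : ∀ θ, P θ A + P θ Aᶜ = 1 := fun θ => by
      haveI := hP θ; rw [measure_add_measure_compl hA, measure_univ]
    simp only [heq, lintegral_one, measure_univ]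
  -- finiteness
  have hRβ0 : R + ENNReal.ofReal β0 ≠ ⊤ :=
    ENNReal.add_ne_top.mpr ⟨hRne, ENNReal.ofReal_ne_top⟩
  have hRβ1 : R + ENNReal.ofReal β1 ≠ ⊤ :=
    ENNReal.add_ne_top.mpr ⟨hRne, ENNReal.ofReal_ne_top⟩
  have hfin0 : (Pr0.bind P) A ≠ ⊤ := (c0.trans_lt (lt_top_iff_ne_top.mpr hRβ0)).ne
  have hfin1 : (Pr1.bind P) A ≠ ⊤ := by
    intro h; rw [h] at csum; simp at csum
  have hfin1c : (Pr1.bind P) Aᶜ ≠ ⊤ := (c1.trans_lt (lt_top_iff_ne_top.mpr hRβ1)).ne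
  -- pass to reals
  have c0r : ((Pr0.bind P) A).toReal ≤ R.toReal + β0 := by
    have := ENNReal.toReal_mono hRβ0 c0
    rwa [ENNReal.toReal_add hRne ENNReal.ofReal_ne_top, ENNReal.toReal_ofReal hβ0] at this
  have c1r : ((Pr1.bind P) Aᶜ).toReal ≤ R.toReal + β1 := by
    have := ENNReal.toReal_mono hRβ1 c1
    rwa [ENNReal.toReal_add hRne ENNReal.ofReal_ne_top, ENNReal.toReal_ofReal hβ1] at this
  have csumr : ((Pr1.bind P) A).toReal + ((Pr1.bind P) Aᶜ).toReal = 1 := by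
    rw [← ENNReal.toReal_add hfin1 hfin1c, csum, ENNReal.toReal_one]
  have htv : ((Pr1.bind P) A).toReal - ((Pr0.bind P) A).toReal ≤ η :=
    (abs_le.mp (hTV A hA)).2
  -- the supremum in the goal equals R.toReal
  have hsup : (⨆ θ, ((P θ) (E θ)).toReal) = R.toReal :=
    (ENNReal.toReal_iSup (fun θ => ((hEfin θ).trans_lt ENNReal.one_lt_top).ne)).symm
  show (1 - η - β0 - β1) / 2 ≤ ⨆ θ, ((P θ) (E θ)).toReal
  rw [hsup]
  linarith
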